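/- Let M be a symmetric matrix with block structure M = [[M_AA, M_AC, 0],[M_CA, M_CC, M_CB],[0, M_BC, M_BB]] corresponding to a partition of indices into sets A, C, B (no nonzero entries between A and B). Then M is positive definite if and only if M_AA > 0, M_BB > 0, and S₁ + S₂ − M_CC > 0, where S₁ = M_CC − M_CA M_AA⁻¹ M_AC and S₂ = M_CC − M_CB M_BB⁻¹ M_BC. -/

import Mathlib

open Matrix

section Aux

variable {m n : Type*} [Fintype m] [DecidableEq m] [Fintype n] [DecidableEq n]

private lemma sum_elim_eq_zero_iff {α : Type*} [Zero α] (x : m → α) (y : n → α) :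
    Sum.elim x y = 0 ↔ x = 0 ∧ y = 0 := by
  constructor
  · intro h
    exact ⟨funext fun i => congrFun h (Sum.inl i), funext fun i => congrFun h (Sum.inr i)⟩
  · rintro ⟨hx, hy⟩
    rw [hx, hy, Sum.elim_zero_zero]

private lemma posDef_fromBlocks_diag {A : Matrix m m ℝ} {B : Matrix m n ℝ}
    {C : Matrix n m ℝ} {D : Matrix n n ℝ}
    (h : (Matrix.fromBlocks A B C D).PosDef) : A.PosDef ∧ D.PosDef := by
  obtain ⟨hHerm, hpos⟩ := posDef_iff_dotProduct_mulVec.mp h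
  rw [Matrix.isHermitian_fromBlocks_iff] at hHerm
  refine ⟨posDef_iff_dotProduct_mulVec.mpr ⟨hHerm.1, fun x hx => ?_⟩, posDef_iff_dotProduct_mulVec.mpr ⟨hHerm.2.2.2, fun y hy => ?_⟩⟩
  · have := hpos (x := Sum.elim x 0) (by
      simp [sum_elim_eq_zero_iff, hx])
    simpa [Matrix.fromBlocks_mulVec, star_trivial] using this
  · have := hpos (x := Sum.elim 0 y) (by
      simp [sum_elim_eq_zero_iff, hy])
    simpa [Matrix.fromBlocks_mulVec, star_trivial] using this

private lemma posDef_fromBlocks₁₁ {A : Matrix m m ℝ} (B : Matrix m n ℝ)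
    (D : Matrix n n ℝ) (hA : A.PosDef) [Invertible A] :
    (Matrix.fromBlocks A B Bᴴ D).PosDef ↔ (D - Bᴴ * A⁻¹ * B).PosDef := by
  constructor
  · intro h
    refine posDef_iff_dotProduct_mulVec.mpr ⟨(Matrix.IsHermitian.fromBlocks₁₁ B D hA.1).mp h.1, fun y hy => ?_⟩
    have key := h.dotProduct_mulVec_pos (x := Sum.elim (-((A⁻¹ * B) *ᵥ y)) y) (by
      simp [sum_elim_eq_zero_iff, hy])
    rwa [dotProduct_mulVec, Matrix.schur_complement_eq₁₁ B D _ _ hA.1, neg_add_cancel,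
      dotProduct_zero, zero_add, ← dotProduct_mulVec] at key
  · intro h
    refine posDef_iff_dotProduct_mulVec.mpr ⟨(Matrix.IsHermitian.fromBlocks₁₁ B D hA.1).mpr h.1, fun z hz => ?_⟩
    rw [dotProduct_mulVec, ← Sum.elim_comp_inl_inr z,
      Matrix.schur_complement_eq₁₁ B D _ _ hA.1]
    by_cases hy : z ∘ Sum.inr = 0
    · have hx : z ∘ Sum.inl ≠ 0 := by
        intro hx
        apply hz
        rw [← Sum.elim_comp_inl_inr z, hx, hy, Sum.elim_zero_zero]
      rw [hy]
      simp only [Matrix.mulVec_zero, add_zero, star_zero, Matrix.zero_mulVec,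
        dotProduct_zero, zero_dotProduct, Matrix.vecMul_zero]
      have := hA.dotProduct_mulVec_pos hx
      rw [dotProduct_mulVec] at this
      linarith
    · have h1 : (0:ℝ) ≤ star (z ∘ Sum.inl + (A⁻¹ * B) *ᵥ (z ∘ Sum.inr)) ᵥ* A ⬝ᵥ
          (z ∘ Sum.inl + (A⁻¹ * B) *ᵥ (z ∘ Sum.inr)) := by
        rw [← dotProduct_mulVec]
        exact hA.posSemidef.dotProduct_mulVec_nonneg _
      have h2 := h.dotProduct_mulVec_pos hy
      rw [dotProduct_mulVec] at h2
      linarith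

private lemma posDef_fromBlocks₂₂ (A : Matrix m m ℝ) (B : Matrix m n ℝ)
    {D : Matrix n n ℝ} (hD : D.PosDef) [Invertible D] :
    (Matrix.fromBlocks A B Bᴴ D).PosDef ↔ (A - B * D⁻¹ * Bᴴ).PosDef := by
  constructor
  · intro h
    refine posDef_iff_dotProduct_mulVec.mpr ⟨(Matrix.IsHermitian.fromBlocks₂₂ A B hD.1).mp h.1, fun x hx => ?_⟩
    have key := h.dotProduct_mulVec_pos (x := Sum.elim x (-((D⁻¹ * Bᴴ) *ᵥ x))) (by
      simp [sum_elim_eq_zero_iff, hx])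
    rwa [dotProduct_mulVec, Matrix.schur_complement_eq₂₂ A B _ _ hD.1, add_neg_cancel,
      dotProduct_zero, zero_add, ← dotProduct_mulVec] at key
  · intro h
    refine posDef_iff_dotProduct_mulVec.mpr ⟨(Matrix.IsHermitian.fromBlocks₂₂ A B hD.1).mpr h.1, fun z hz => ?_⟩
    rw [dotProduct_mulVec, ← Sum.elim_comp_inl_inr z,
      Matrix.schur_complement_eq₂₂ A B _ _ hD.1]
    by_cases hx : z ∘ Sum.inl = 0
    · have hy : z ∘ Sum.inr ≠ 0 := by
        intro hy
        apply hz
        rw [← Sum.elim_comp_inl_inr z, hx, hy, Sum.elim_zero_zero]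
      rw [hx]
      simp only [Matrix.mulVec_zero, zero_add, star_zero, Matrix.zero_mulVec,
        dotProduct_zero, zero_dotProduct, Matrix.vecMul_zero]
      have := hD.dotProduct_mulVec_pos hy
      rw [dotProduct_mulVec] at this
      linarith
    · have h1 : (0:ℝ) ≤ star ((D⁻¹ * Bᴴ) *ᵥ (z ∘ Sum.inl) + z ∘ Sum.inr) ᵥ* D ⬝ᵥ
          ((D⁻¹ * Bᴴ) *ᵥ (z ∘ Sum.inl) + z ∘ Sum.inr) := by
        rw [← dotProduct_mulVec]
        exact hD.posSemidef.dotProduct_mulVec_nonneg _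
      have h2 := h.dotProduct_mulVec_pos hx
      rw [dotProduct_mulVec] at h2
      linarith

end Aux

private lemma conjTranspose_eq_transpose_real {p q : Type*} (X : Matrix p q ℝ) : Xᴴ = Xᵀ := by
  ext i j; simp

/-- For a symmetric matrix `M = [[M_AA, M_AC, 0], [M_CA, M_CC, M_CB], [0, M_BC, M_BB]]`
(with `M_CA = M_ACᵀ`, `M_BC = M_CBᵀ`), `M` is positive definite iff `M_AA > 0`,
`M_BB > 0` and `S₁ + S₂ - M_CC > 0`, where `S₁`, `S₂` are the Schur complements of
`M_AA` and `M_BB` in the corresponding 2×2 blocks. -/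
theorem stmt_18 {ιA ιC ιB : Type*} [Fintype ιA] [Fintype ιC] [Fintype ιB]
    [DecidableEq ιA] [DecidableEq ιC] [DecidableEq ιB]
    (MAA : Matrix ιA ιA ℝ) (MAC : Matrix ιA ιC ℝ) (MCC : Matrix ιC ιC ℝ)
    (MCB : Matrix ιC ιB ℝ) (MBB : Matrix ιB ιB ℝ)
    (hAA : MAA.IsSymm) (hCC : MCC.IsSymm) (hBB : MBB.IsSymm)
    (M : Matrix (ιA ⊕ ιC ⊕ ιB) (ιA ⊕ ιC ⊕ ιB) ℝ)
    (hM : M = Matrix.fromBlocks MAA (Matrix.fromCols MAC 0)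
      (Matrix.fromRows MACᵀ 0) (Matrix.fromBlocks MCC MCB MCBᵀ MBB)) :
    M.PosDef ↔
      MAA.PosDef ∧ MBB.PosDef ∧
        ((MCC - MACᵀ * MAA⁻¹ * MAC) + (MCC - MCB * MBB⁻¹ * MCBᵀ) - MCC).PosDef := by
  subst hM
  have hB : Matrix.fromRows MACᵀ (0 : Matrix ιB ιA ℝ) = (Matrix.fromCols MAC 0)ᴴ := by
    rw [conjTranspose_eq_transpose_real]
    ext (i | i) j <;> simp [Matrix.fromCols, Matrix.fromRows_apply_inl, Matrix.fromRows_apply_inr]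
  have hCB' : MCBᵀ = MCBᴴ := (conjTranspose_eq_transpose_real MCB).symm
  rw [hB, hCB']
  -- key algebraic identity for the first Schur complement step
  have hkey : Matrix.fromBlocks MCC MCB MCBᴴ MBB -
      (Matrix.fromCols MAC (0 : Matrix ιA ιB ℝ))ᴴ * MAA⁻¹ * Matrix.fromCols MAC 0 =
      Matrix.fromBlocks (MCC - MACᵀ * MAA⁻¹ * MAC) MCB MCBᴴ MBB := by
    rw [← hB, Matrix.fromRows_mul, Matrix.fromRows_mul_fromCols]
    ext (i | i) (j | j) <;>
      simp [Matrix.fromBlocks, Matrix.sub_apply]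
  have htarget : (MCC - MACᵀ * MAA⁻¹ * MAC) + (MCC - MCB * MBB⁻¹ * MCBᴴ) - MCC =
      (MCC - MACᵀ * MAA⁻¹ * MAC) - MCB * MBB⁻¹ * MCBᴴ := by
    abel
  constructor
  · intro h
    have hd := posDef_fromBlocks_diag h
    have hAA' : MAA.PosDef := hd.1
    have hd2 := posDef_fromBlocks_diag hd.2
    have hBB' : MBB.PosDef := hd2.2
    haveI := hAA'.isUnit.invertible
    haveI := hBB'.isUnit.invertible
    have h2 := (posDef_fromBlocks₁₁ (Matrix.fromCols MAC 0)
      (Matrix.fromBlocks MCC MCB MCBᴴ MBB) hAA').mp h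
    rw [hkey] at h2
    have h3 := (posDef_fromBlocks₂₂ (MCC - MACᵀ * MAA⁻¹ * MAC) MCB hBB').mp h2
    refine ⟨hAA', hBB', ?_⟩
    rwa [htarget]
  · rintro ⟨hAA', hBB', hS⟩
    haveI := hAA'.isUnit.invertible
    haveI := hBB'.isUnit.invertible
    rw [htarget] at hS
    have h2 := (posDef_fromBlocks₂₂ (MCC - MACᵀ * MAA⁻¹ * MAC) MCB hBB').mpr hS
    rw [← hkey] at h2
    exact (posDef_fromBlocks₁₁ (Matrix.fromCols MAC 0)
      (Matrix.fromBlocks MCC MCB MCBᴴ MBB) hAA').mpr h2
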